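/- arXiv:2108.03682 — 5 statements merged into one kernel-verified Lean document; each statement's English description precedes it below -/
import Mathlib

section
/- For each integer i ≥ 0 there is a constant c_i (independent of N) such that for all x in the N-dimensional hypercube, the i-step simple random walk transition probability satisfies D^{*i}(x) ≤ c_i · N^{-⌈i/2⌉}. -/
open Finset

/-- Simple random walk transition probability on the hypercube (real-valued). -/
noncomputable def hcD (N : ℕ) (x : Fin N → ZMod 2) : ℝ :=
  if hammingNorm x = 1 then (N : ℝ)⁻¹ else 0

/-- `i`-fold convolution power `D^{*i}`, the `i`-step transition probability of
simple random walk on the hypercube. -/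
noncomputable def hcDpow (N : ℕ) : ℕ → (Fin N → ZMod 2) → ℝ
  | 0 => fun x => if x = 0 then 1 else 0
  | (i + 1) => fun x => ∑ y, hcD N (x - y) * hcDpow N i y

lemma hcDpow_zero' (N : ℕ) (x : Fin N → ZMod 2) :
    hcDpow N 0 x = if x = 0 then 1 else 0 := rfl

lemma hcDpow_succ (N i : ℕ) (x : Fin N → ZMod 2) :
    hcDpow N (i + 1) x = ∑ y, hcD N (x - y) * hcDpow N i y := rfl

lemma zmod2_eq : ∀ a b c : ZMod 2, a ≠ c → b ≠ c → a = b := by decide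

lemma zmod2_cases : ∀ a : ZMod 2, a = 0 ∨ a = 1 := by decide

lemma diff_exists {N : ℕ} {x y : Fin N → ZMod 2} (h : hammingNorm (x - y) = 1) :
    ∃ j, x j ≠ y j := by
  have hne : x - y ≠ 0 := by
    intro h0; rw [h0, hammingNorm_zero] at h; omega
  by_contra hc
  push_neg at hc
  apply hne
  funext k
  simp [sub_eq_zero, hc k]

lemma diff_unique {N : ℕ} {x y : Fin N → ZMod 2} (h : hammingNorm (x - y) = 1)
    {j : Fin N} (hj : x j ≠ y j) : ∀ k, k ≠ j → x k = y k := by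
  intro k hk
  by_contra hxk
  have hcard : ({k, j} : Finset (Fin N)).card ≤ ({i | (x - y) i ≠ 0} : Finset (Fin N)).card := by
    apply card_le_card
    intro a ha
    simp only [mem_insert, mem_singleton] at ha
    simp only [mem_filter, mem_univ, true_and]
    rcases ha with rfl | rfl
    · simpa [sub_eq_zero] using hxk
    · simpa [sub_eq_zero] using hj
  have h' : ({i | (x - y) i ≠ 0} : Finset (Fin N)).card = 1 := h
  rw [card_pair hk] at hcard
  omega

lemma hn_succ_of {N : ℕ} {x y : Fin N → ZMod 2} {j : Fin N} (h0 : x j = 0) (hj : y j ≠ 0)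
    (hk : ∀ k, k ≠ j → x k = y k) : hammingNorm y = hammingNorm x + 1 := by
  have hx : hammingNorm x = (univ.filter fun i => x i ≠ 0).card := rfl
  have hy : hammingNorm y = (univ.filter fun i => y i ≠ 0).card := rfl
  have hset : (univ.filter fun i => y i ≠ 0)
      = insert j (univ.filter fun i => x i ≠ 0) := by
    ext k
    simp only [mem_filter, mem_univ, true_and, mem_insert]
    by_cases hkj : k = j
    · subst hkj; simp [hj]
    · rw [← hk k hkj]
      constructor
      · exact fun h => Or.inr h
      · rintro (rfl | h)
        · exact absurd rfl hkj
        · exact h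
  rw [hy, hset, card_insert_of_notMem (by simp [h0]), hx]

lemma hn_dichotomy {N : ℕ} {x y : Fin N → ZMod 2} (h : hammingNorm (x - y) = 1) :
    hammingNorm y = hammingNorm x + 1 ∨ hammingNorm x = hammingNorm y + 1 := by
  obtain ⟨j, hj⟩ := diff_exists h
  have huniq := diff_unique h hj
  rcases zmod2_cases (x j) with h0 | h1
  · left
    exact hn_succ_of h0 (by rw [← h0]; exact fun hy => hj (hy.symm ▸ h0.symm ▸ rfl)) huniq
  · right
    have hy0 : y j = 0 := by
      rcases zmod2_cases (y j) with hy | hy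
      · exact hy
      · exact absurd (h1.trans hy.symm) hj
    refine hn_succ_of hy0 (by rw [h1]; decide) (fun k hk => (huniq k hk).symm)

lemma hn_triangle {N : ℕ} (x y : Fin N → ZMod 2) :
    hammingNorm x ≤ hammingNorm y + hammingNorm (x - y) := by
  have := hammingDist_triangle x y 0
  rwa [hammingDist_zero_right, hammingDist_zero_right, hammingDist_comm, hammingDist_eq_hammingNorm, neg_add_eq_sub,
    add_comm] at this

lemma hcD_nonneg (N : ℕ) (x : Fin N → ZMod 2) : 0 ≤ hcD N x := by
  rw [hcD]; split
  · positivity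
  · exact le_refl 0

lemma hcDpow_nonneg (N : ℕ) : ∀ i (x : Fin N → ZMod 2), 0 ≤ hcDpow N i x
  | 0, x => by rw [hcDpow_zero']; split <;> norm_num
  | (i+1), x => by
    rw [hcDpow_succ]
    exact Finset.sum_nonneg fun y _ => mul_nonneg (hcD_nonneg N _) (hcDpow_nonneg N i y)

lemma hcDpow_eq_zero (N : ℕ) : ∀ i (x : Fin N → ZMod 2), i < hammingNorm x →
    hcDpow N i x = 0
  | 0, x, h => by
    rw [hcDpow_zero', if_neg]
    intro h0
    rw [h0, hammingNorm_zero] at h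
    omega
  | (i+1), x, h => by
    rw [hcDpow_succ]
    apply Finset.sum_eq_zero
    intro y _
    rw [hcD]
    split
    next h1 =>
      have ht := hn_triangle x y
      rw [hcDpow_eq_zero N i y (by omega), mul_zero]
    next => rw [zero_mul]

noncomputable def diffIdx {N : ℕ} (hN : 0 < N) (x y : Fin N → ZMod 2) : Fin N :=
  if h : ∃ j, x j ≠ y j then h.choose else ⟨0, hN⟩

lemma diffIdx_spec {N : ℕ} (hN : 0 < N) {x y : Fin N → ZMod 2}
    (h : hammingNorm (x - y) = 1) : x (diffIdx hN x y) ≠ y (diffIdx hN x y) := by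
  have h' : ∃ j, x j ≠ y j := diff_exists h
  rw [diffIdx, dif_pos h']
  exact h'.choose_spec

lemma diffIdx_inj {N : ℕ} (hN : 0 < N) {x y1 y2 : Fin N → ZMod 2}
    (h1 : hammingNorm (x - y1) = 1) (h2 : hammingNorm (x - y2) = 1)
    (he : diffIdx hN x y1 = diffIdx hN x y2) : y1 = y2 := by
  funext k
  by_cases hk : k = diffIdx hN x y1
  · subst hk
    refine zmod2_eq _ _ _ (Ne.symm (diffIdx_spec hN h1)) ?_
    rw [he]
    exact Ne.symm (diffIdx_spec hN h2)
  · rw [← diff_unique h1 (diffIdx_spec hN h1) k hk,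
      diff_unique h2 (diffIdx_spec hN h2) k (he ▸ hk)]

lemma div_pow_anti {c Nr : ℝ} (hc : 0 ≤ c) (hN : 1 ≤ Nr) {a b : ℕ} (h : b ≤ a) :
    c / Nr ^ a ≤ c / Nr ^ b := by
  gcongr

lemma key (i : ℕ) : ∃ c : ℝ, 0 < c ∧ ∀ N : ℕ, 0 < N → ∀ x : Fin N → ZMod 2,
    hcDpow N i x ≤ c / (N : ℝ) ^ ((i + hammingNorm x + 1) / 2) := by
  induction i with
  | zero =>
    refine ⟨1, one_pos, fun N hN x => ?_⟩
    have hN1 : (1:ℝ) ≤ (N:ℝ) := by exact_mod_cast hN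
    rw [hcDpow_zero']
    split
    next h =>
      subst h
      simp [hammingNorm_zero]
    next h =>
      positivity
  | succ i ih =>
    obtain ⟨c, hc, hb⟩ := ih
    refine ⟨(i+2) * c, by positivity, fun N hN x => ?_⟩
    have hN1 : (1:ℝ) ≤ (N:ℝ) := by exact_mod_cast hN
    have hNpos : (0:ℝ) < (N:ℝ) := by exact_mod_cast hN
    set m := hammingNorm x with hm
    by_cases hbig : i + 1 < m
    · rw [hcDpow_eq_zero N (i+1) x hbig]
      positivity
    · push_neg at hbig
      set S : Finset (Fin N → ZMod 2) := {y | hammingNorm (x - y) = 1} with hS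
      have hrw : hcDpow N (i+1) x = ∑ y ∈ S, (N:ℝ)⁻¹ * hcDpow N i y := by
        rw [hcDpow_succ, hS, Finset.sum_filter]
        refine Finset.sum_congr rfl fun y _ => ?_
        rw [hcD]
        split <;> simp
      set E : ℝ := (N:ℝ) ^ ((i + m + 2) / 2) with hE
      have hEpos : 0 < E := pow_pos hNpos _
      have hB2 : (0:ℝ) ≤ (N:ℝ)⁻¹ * (c / E) := by positivity
      have hexp : (i + m) / 2 + 1 = (i + m + 2) / 2 := by omega
      have hB1eq : (N:ℝ)⁻¹ * (c / (N:ℝ) ^ ((i + m) / 2)) = c / E := by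
        rw [hE, inv_mul_eq_div, div_div, ← pow_succ, hexp]
      -- membership facts
      have hmemS : ∀ y ∈ S, hammingNorm (x - y) = 1 := by
        intro y hy
        rw [hS] at hy
        simpa using hy
      -- cardinality of S
      have hcardS : S.card ≤ N := by
        have := Finset.card_le_card_of_injOn (fun y => diffIdx hN x y)
          (fun y _ => Finset.mem_univ _)
          (fun y1 hy1 y2 hy2 he => diffIdx_inj hN (hmemS y1 hy1) (hmemS y2 hy2) he)
        simpa using this
      set S1 : Finset (Fin N → ZMod 2) := S.filter (fun y => hammingNorm y < m) with hS1
      set S2 : Finset (Fin N → ZMod 2) := S.filter (fun y => ¬ hammingNorm y < m) with hS2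
      have hsplit : ∑ y ∈ S, (N:ℝ)⁻¹ * hcDpow N i y
          = ∑ y ∈ S1, (N:ℝ)⁻¹ * hcDpow N i y + ∑ y ∈ S2, (N:ℝ)⁻¹ * hcDpow N i y := by
        rw [hS1, hS2]
        exact (Finset.sum_filter_add_sum_filter_not S _ _).symm
      -- card S1 ≤ m
      have hcardS1 : S1.card ≤ m := by
        have hsub : ∀ y ∈ S1, diffIdx hN x y ∈ ({j | x j ≠ 0} : Finset (Fin N)) := by
          intro y hy
          rw [hS1, mem_filter] at hy
          obtain ⟨hyS, hylt⟩ := hy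
          simp only [mem_filter, mem_univ, true_and]
          intro h0
          have hyj : y (diffIdx hN x y) ≠ 0 := by
            intro hy0
            exact diffIdx_spec hN (hmemS y hyS) (h0.trans hy0.symm)
          have := hn_succ_of h0 hyj (fun k hk => diff_unique (hmemS y hyS)
            (diffIdx_spec hN (hmemS y hyS)) k hk)
          omega
        have := Finset.card_le_card_of_injOn (fun y => diffIdx hN x y) hsub
          (fun y1 hy1 y2 hy2 he => diffIdx_inj hN
            (hmemS y1 (Finset.mem_of_mem_filter y1 hy1))
            (hmemS y2 (Finset.mem_of_mem_filter y2 hy2)) he)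
        have hcardsupp : ({j | x j ≠ 0} : Finset (Fin N)).card = m := rfl
        omega
      -- bound terms in S1
      have hbound1 : ∀ y ∈ S1, (N:ℝ)⁻¹ * hcDpow N i y ≤ c / E := by
        intro y hy
        rw [hS1, mem_filter] at hy
        obtain ⟨hyS, _⟩ := hy
        have hdich := hn_dichotomy (hmemS y hyS)
        have hle : (i + m) / 2 ≤ (i + hammingNorm y + 1) / 2 := by omega
        have := hb N hN y
        have h2 : hcDpow N i y ≤ c / (N:ℝ) ^ ((i + m) / 2) :=
          this.trans (div_pow_anti (le_of_lt hc) hN1 hle)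
        rw [← hB1eq]
        exact mul_le_mul_of_nonneg_left h2 (by positivity)
      -- bound terms in S2
      have hbound2 : ∀ y ∈ S2, (N:ℝ)⁻¹ * hcDpow N i y ≤ (N:ℝ)⁻¹ * (c / E) := by
        intro y hy
        rw [hS2, mem_filter] at hy
        obtain ⟨hyS, hyge⟩ := hy
        have hdich := hn_dichotomy (hmemS y hyS)
        have hyeq : hammingNorm y = m + 1 := by omega
        have h2 : hcDpow N i y ≤ c / E := by
          have hee : (i + hammingNorm y + 1) / 2 = (i + m + 2) / 2 := by omega
          rw [hE, ← hee]
          exact hb N hN y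
        exact mul_le_mul_of_nonneg_left h2 (by positivity)
      have hsum1 : ∑ y ∈ S1, (N:ℝ)⁻¹ * hcDpow N i y ≤ (i+1 : ℝ) * (c / E) := by
        calc ∑ y ∈ S1, (N:ℝ)⁻¹ * hcDpow N i y ≤ S1.card • (c / E) :=
              Finset.sum_le_card_nsmul S1 _ _ hbound1
          _ = (S1.card : ℝ) * (c / E) := by rw [nsmul_eq_mul]
          _ ≤ (i+1 : ℝ) * (c / E) := by
              have : (S1.card : ℝ) ≤ (i+1 : ℝ) := by
                have : S1.card ≤ i + 1 := le_trans hcardS1 hbig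
                exact_mod_cast this
              have hcE : (0:ℝ) ≤ c / E := le_of_lt (div_pos hc hEpos)
              nlinarith
      have hsum2 : ∑ y ∈ S2, (N:ℝ)⁻¹ * hcDpow N i y ≤ c / E := by
        calc ∑ y ∈ S2, (N:ℝ)⁻¹ * hcDpow N i y ≤ S2.card • ((N:ℝ)⁻¹ * (c / E)) :=
              Finset.sum_le_card_nsmul S2 _ _ hbound2
          _ = (S2.card : ℝ) * ((N:ℝ)⁻¹ * (c / E)) := by rw [nsmul_eq_mul]
          _ ≤ (N : ℝ) * ((N:ℝ)⁻¹ * (c / E)) := by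
              have hc2 : S2.card ≤ N := le_trans (Finset.card_le_card (Finset.filter_subset _ _)) hcardS
              have : (S2.card : ℝ) ≤ (N : ℝ) := by exact_mod_cast hc2
              nlinarith
          _ = c / E := by field_simp
      have hgoal : (i + 1 + m + 1) / 2 = (i + m + 2) / 2 := by omega
      calc hcDpow N (i+1) x = ∑ y ∈ S1, (N:ℝ)⁻¹ * hcDpow N i y
            + ∑ y ∈ S2, (N:ℝ)⁻¹ * hcDpow N i y := by rw [hrw, hsplit]
        _ ≤ (i+1 : ℝ) * (c / E) + c / E := add_le_add hsum1 hsum2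
        _ = (i + 2 : ℝ) * c / E := by ring
        _ = (i + 2 : ℝ) * c / (N:ℝ) ^ ((i + 1 + m + 1) / 2) := by rw [hgoal, hE]
      -- note: goal exponent is ((i+1) + m + 1)/2

theorem rw_transition_bound (i : ℕ) :
    ∃ c : ℝ, 0 < c ∧ ∀ N : ℕ, 0 < N → ∀ x : Fin N → ZMod 2,
      hcDpow N i x ≤ c / (N : ℝ) ^ ((i + 1) / 2) := by
  obtain ⟨c, hc, hb⟩ := key i
  refine ⟨c, hc, fun N hN x => ?_⟩
  have hN1 : (1:ℝ) ≤ (N:ℝ) := by exact_mod_cast hN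
  exact (hb N hN x).trans (div_pow_anti (le_of_lt hc) hN1 (by omega))
end

section
/- For every integer j ≥ 1 there is a constant c_j such that for all N and all t ∈ [0,1], (1/2^N) Σ_{k∈Q^N, k≠0} 1/(1 - t·D̂(k))^j ≤ c_j, where D̂(k) = 1 - 2|k|/N. -/
open Finset

lemma choose_prod (N m j : ℕ) :
    N.choose m * ∏ i ∈ Finset.range j, (N + 1 + i) =
      (N + j).choose (m + j) * ∏ i ∈ Finset.range j, (m + 1 + i) := by
  induction j with
  | zero => simp
  | succ j ih =>
    rw [Finset.prod_range_succ, Finset.prod_range_succ, ← mul_assoc, ih]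
    have h := Nat.add_one_mul_choose_eq (N + j) (m + j)
    rw [show N + 1 + j = N + j + 1 from by ring, mul_right_comm, mul_comm ((N+j).choose (m+j)), h,
      show N + (j+1) = N + j + 1 from by ring, show m + (j+1) = m + j + 1 from by ring]
    ring

lemma chooseB (N m j : ℕ) (hm : 1 ≤ m) :
    ((N:ℝ)/m)^j * (N.choose m : ℝ) ≤ ((j:ℝ)+1)^j * ((N+j).choose (m+j) : ℝ) := by
  have hm' : (0:ℝ) < m := by exact_mod_cast hm
  have key : (N.choose m : ℝ) * ∏ i ∈ range j, ((N:ℝ)+1+i) =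
      ((N+j).choose (m+j) : ℝ) * ∏ i ∈ range j, ((m:ℝ)+1+i) := by
    have := choose_prod N m j
    have := congrArg (Nat.cast : ℕ → ℝ) this
    push_cast at this
    convert this using 2 <;> norm_num
  have h1 : (N:ℝ)^j ≤ ∏ i ∈ range j, ((N:ℝ)+1+i) := by
    calc (N:ℝ)^j = ∏ i ∈ range j, (N:ℝ) := by simp
    _ ≤ _ := Finset.prod_le_prod (fun i _ => by positivity) (fun i _ => by
        have : (0:ℝ) ≤ i := by positivity
        linarith)
  have h2 : ∏ i ∈ range j, ((m:ℝ)+1+i) ≤ ((m:ℝ)*((j:ℝ)+1))^j := by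
    calc ∏ i ∈ range j, ((m:ℝ)+1+i) ≤ ∏ i ∈ range j, ((m:ℝ)*((j:ℝ)+1)) := by
          apply Finset.prod_le_prod (fun i _ => by positivity)
          intro i hi
          have hij : (i:ℝ) ≤ (j:ℝ) - 1 := by
            have : i + 1 ≤ j := Finset.mem_range.mp hi
            have : (i:ℝ) + 1 ≤ (j:ℝ) := by exact_mod_cast this
            linarith
          have hm1 : (1:ℝ) ≤ (m:ℝ) := by exact_mod_cast hm
          nlinarith [mul_le_mul_of_nonneg_right hm1 (show (0:ℝ) ≤ (j:ℝ) by positivity)]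
    _ = _ := by rw [Finset.prod_const, Finset.card_range]
  have hC : (0:ℝ) ≤ (N.choose m : ℝ) := by positivity
  have hC' : (0:ℝ) ≤ ((N+j).choose (m+j) : ℝ) := by positivity
  rw [div_pow, div_mul_eq_mul_div, div_le_iff₀ (by positivity)]
  calc (N:ℝ)^j * (N.choose m : ℝ) ≤ (∏ i ∈ range j, ((N:ℝ)+1+i)) * (N.choose m : ℝ) :=
        mul_le_mul_of_nonneg_right h1 hC
    _ = ((N+j).choose (m+j) : ℝ) * ∏ i ∈ range j, ((m:ℝ)+1+i) := by rw [mul_comm, key]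
    _ ≤ ((N+j).choose (m+j) : ℝ) * ((m:ℝ)*((j:ℝ)+1))^j := mul_le_mul_of_nonneg_left h2 hC'
    _ = ((j:ℝ)+1)^j * ((N+j).choose (m+j) : ℝ) * (m:ℝ)^j := by rw [mul_pow]; ring

lemma card_sphere_le (N m : ℕ) :
    ((Finset.univ.filter (fun k : Fin N → ZMod 2 => hammingNorm k = m)).card : ℕ)
      ≤ N.choose m := by
  classical
  have : (Finset.univ.filter (fun k : Fin N → ZMod 2 => hammingNorm k = m)).card
      ≤ (Finset.powersetCard m (Finset.univ : Finset (Fin N))).card := by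
    apply Finset.card_le_card_of_injOn (fun k => Finset.univ.filter (fun i => k i ≠ 0))
    · intro k hk
      simp only [Finset.mem_coe, Finset.mem_filter, Finset.mem_univ, true_and] at hk ⊢
      rw [Finset.mem_powersetCard]
      exact ⟨Finset.subset_univ _, by rw [← hk]; rfl⟩
    · intro a _ b _ hab
      funext i
      have := Finset.ext_iff.mp hab i
      simp only [Finset.mem_filter, Finset.mem_univ, true_and] at this
      revert this
      generalize a i = x; generalize b i = y
      revert x y; decide
  simpa [Finset.card_powersetCard] using this

/-- Fourier transform of the simple random walk step distribution on the
hypercube: `D̂(k) = 1 - 2|k|/N`, with `|k|` the Hamming weight of `k`. -/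
noncomputable def hcDhat (N : ℕ) (k : Fin N → ZMod 2) : ℝ :=
  1 - 2 * (hammingNorm k : ℝ) / (N : ℝ)

theorem rw_resolvent_sum_bound (j : ℕ) (hj : 1 ≤ j) :
    ∃ c : ℝ, ∀ N : ℕ, 0 < N → ∀ t : ℝ, t ∈ Set.Icc (0 : ℝ) 1 →
      ((2 : ℝ) ^ N)⁻¹ *
        ∑ k ∈ Finset.univ.filter (fun k : Fin N → ZMod 2 => k ≠ 0),
          (1 - t * hcDhat N k)⁻¹ ^ j ≤ c := by
  classical
  refine ⟨((j:ℝ)+1)^j * 2^j, fun N hN t ht => ?_⟩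
  obtain ⟨ht0, ht1⟩ := ht
  have hNR : (0:ℝ) < N := by exact_mod_cast hN
  set S := Finset.univ.filter (fun k : Fin N → ZMod 2 => k ≠ 0) with hS
  -- pointwise bound
  have hpt : ∀ k ∈ S, (1 - t * hcDhat N k)⁻¹ ^ j ≤ ((N:ℝ)/(hammingNorm k))^j := by
    intro k hk
    have hk0 : k ≠ 0 := (Finset.mem_filter.mp hk).2
    have hm1 : 1 ≤ hammingNorm k := hammingNorm_pos_iff.mpr hk0
    have hm1R : (1:ℝ) ≤ (hammingNorm k : ℝ) := by exact_mod_cast hm1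
    have hmN : hammingNorm k ≤ N := by
      simpa using hammingNorm_le_card_fintype (x := k)
    have hmNR : (hammingNorm k : ℝ) ≤ (N:ℝ) := by exact_mod_cast hmN
    set m : ℝ := (hammingNorm k : ℝ)
    have hlow : m / N ≤ 1 - t * hcDhat N k := by
      have hexp : 1 - t * hcDhat N k - m / N = (1-t) * (1 - m/N) + t * (m/N) := by
        unfold hcDhat
        field_simp
        ring
      have h1 : (0:ℝ) ≤ 1 - m/N := by
        rw [sub_nonneg, div_le_one hNR]; exact hmNR
      have h2 : (0:ℝ) ≤ m/N := by positivity
      nlinarith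
    have hpos : (0:ℝ) < m / N := by positivity
    have hinv : (1 - t * hcDhat N k)⁻¹ ≤ (m / N)⁻¹ :=
      inv_anti₀ hpos hlow
    have : (1 - t * hcDhat N k)⁻¹ ^ j ≤ ((m/N)⁻¹)^j := by
      apply pow_le_pow_left₀ _ hinv
      exact inv_nonneg.mpr (le_of_lt (lt_of_lt_of_le hpos hlow))
    simpa [inv_div] using this
  have hsum1 : ∑ k ∈ S, (1 - t * hcDhat N k)⁻¹ ^ j
      ≤ ∑ k ∈ S, ((N:ℝ)/(hammingNorm k))^j := Finset.sum_le_sum hpt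
  -- regroup by hamming norm
  have hcomp : ∑ k ∈ S, ((N:ℝ)/(hammingNorm k))^j
      = ∑ b ∈ S.image hammingNorm,
          ((S.filter (fun k => hammingNorm k = b)).card : ℝ) * ((N:ℝ)/b)^j := by
    rw [Finset.sum_comp (fun b : ℕ => ((N:ℝ)/(b:ℝ))^j) hammingNorm]
    simp [nsmul_eq_mul]
  have hstep : ∀ b ∈ S.image hammingNorm,
      ((S.filter (fun k => hammingNorm k = b)).card : ℝ) * ((N:ℝ)/b)^j
        ≤ ((j:ℝ)+1)^j * ((N+j).choose (b+j) : ℝ) := by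
    intro b hb
    obtain ⟨k, hk, hkb⟩ := Finset.mem_image.mp hb
    have hk0 : k ≠ 0 := (Finset.mem_filter.mp hk).2
    have hb1 : 1 ≤ b := hkb ▸ hammingNorm_pos_iff.mpr hk0
    have hcard : (S.filter (fun k => hammingNorm k = b)).card ≤ N.choose b := by
      refine le_trans (Finset.card_le_card ?_) (card_sphere_le N b)
      intro x hx
      simp only [Finset.mem_filter] at hx ⊢
      exact ⟨Finset.mem_univ _, hx.2⟩
    have hcardR : ((S.filter (fun k => hammingNorm k = b)).card : ℝ) ≤ (N.choose b : ℝ) := by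
      exact_mod_cast hcard
    calc ((S.filter (fun k => hammingNorm k = b)).card : ℝ) * ((N:ℝ)/b)^j
        ≤ (N.choose b : ℝ) * ((N:ℝ)/b)^j := by
          apply mul_le_mul_of_nonneg_right hcardR; positivity
      _ = ((N:ℝ)/b)^j * (N.choose b : ℝ) := by ring
      _ ≤ ((j:ℝ)+1)^j * ((N+j).choose (b+j) : ℝ) := chooseB N b j hb1
  have hsum2 : ∑ b ∈ S.image hammingNorm,
      ((S.filter (fun k => hammingNorm k = b)).card : ℝ) * ((N:ℝ)/b)^j
      ≤ ((j:ℝ)+1)^j * ∑ b ∈ S.image hammingNorm, ((N+j).choose (b+j) : ℝ) := by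
    rw [Finset.mul_sum]
    exact Finset.sum_le_sum hstep
  -- bound the choose sum by 2^(N+j)
  have hchoose : ∑ b ∈ S.image hammingNorm, ((N+j).choose (b+j) : ℝ) ≤ 2^(N+j) := by
    have hinj : Set.InjOn (· + j) ↑(S.image hammingNorm) := fun a _ b _ h => by simpa using h
    rw [← Finset.sum_image (g := fun b => b + j)
      (f := fun r => ((N+j).choose r : ℝ)) (fun a ha b hb h => hinj ha hb h)]
    have hsub : (S.image hammingNorm).image (· + j) ⊆ Finset.range (N+j+1) := by
      intro r hr
      obtain ⟨b, hb, rfl⟩ := Finset.mem_image.mp hr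
      obtain ⟨k, hk, rfl⟩ := Finset.mem_image.mp hb
      have : hammingNorm k ≤ N := by simpa using hammingNorm_le_card_fintype (x := k)
      exact Finset.mem_range.mpr (by omega)
    calc ∑ r ∈ (S.image hammingNorm).image (· + j), ((N+j).choose r : ℝ)
        ≤ ∑ r ∈ Finset.range (N+j+1), ((N+j).choose r : ℝ) :=
          Finset.sum_le_sum_of_subset_of_nonneg hsub (fun _ _ _ => by positivity)
      _ = 2^(N+j) := by
          rw [← Nat.cast_sum]
          rw [Nat.sum_range_choose]
          push_cast
          ring
  -- put it together
  have htot : ∑ k ∈ S, (1 - t * hcDhat N k)⁻¹ ^ j ≤ ((j:ℝ)+1)^j * 2^(N+j) := by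
    calc ∑ k ∈ S, (1 - t * hcDhat N k)⁻¹ ^ j ≤ _ := hsum1
      _ = _ := hcomp
      _ ≤ ((j:ℝ)+1)^j * ∑ b ∈ S.image hammingNorm, ((N+j).choose (b+j) : ℝ) := hsum2
      _ ≤ ((j:ℝ)+1)^j * 2^(N+j) := by
          apply mul_le_mul_of_nonneg_left hchoose; positivity
  have h2N : (0:ℝ) < (2:ℝ)^N := by positivity
  rw [inv_mul_le_iff₀ h2N]
  calc ∑ k ∈ S, (1 - t * hcDhat N k)⁻¹ ^ j ≤ ((j:ℝ)+1)^j * 2^(N+j) := htot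
    _ = 2^N * (((j:ℝ)+1)^j * 2^j) := by rw [pow_add]; ring
end

section
/- Fractional Taylor bound (zeroth order): let ε ∈ (0,1), f(z) = Σ_{n≥0} a_n z^n, ρ > 0, and suppose A_1^{(ε)}(ρ) := Σ_{n≥1} n^ε |a_n| ρ^n < ∞. Then for any complex z with |z| ≤ ρ, |f(z) - f(ρ)| ≤ 2^{1-ε} A_1^{(ε)}(ρ) |1 - z/ρ|^ε. -/
/-- interpolation: if `x ≤ A` and `x ≤ B` then `x ≤ B^ε * A^(1-ε)`. -/
lemma interp_aux {x A B ε : ℝ} (hx : 0 ≤ x) (hA : 0 ≤ A) (hB : 0 ≤ B)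
    (h1 : x ≤ A) (h2 : x ≤ B) (hε0 : 0 ≤ ε) (hε1 : ε ≤ 1) :
    x ≤ B ^ ε * A ^ (1 - ε) := by
  rcases eq_or_lt_of_le hx with h | h
  · exact le_trans h.symm.le (by positivity)
  · calc x = x ^ ε * x ^ (1 - ε) := by
          rw [← Real.rpow_add h]; norm_num
        _ ≤ B ^ ε * A ^ (1 - ε) := by gcongr <;> linarith

open Finset in
lemma key_aux (ε ρ : ℝ) (hε : ε ∈ Set.Ioo (0 : ℝ) 1) (hρ : 0 < ρ)
    (z : ℂ) (hz : ‖z‖ ≤ ρ) (n : ℕ) :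
    ‖z ^ n - (ρ : ℂ) ^ n‖
      ≤ 2 ^ (1 - ε) * ((n : ℝ) ^ ε * ρ ^ n) * ‖1 - z / (ρ : ℂ)‖ ^ ε := by
  obtain ⟨hε0, hε1⟩ := hε
  set C := ‖1 - z / (ρ : ℂ)‖ with hC
  have hC0 : 0 ≤ C := norm_nonneg _
  have hρ' : (ρ : ℂ) ≠ 0 := by exact_mod_cast hρ.ne'
  have hzρ : ‖z - (ρ : ℂ)‖ = ρ * C := by
    have h : z - (ρ : ℂ) = -((ρ : ℂ) * (1 - z / (ρ : ℂ))) := by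
      field_simp
      ring
    rw [h, norm_neg, norm_mul, Complex.norm_real, Real.norm_of_nonneg hρ.le]
  have h1 : ‖z ^ n - (ρ : ℂ) ^ n‖ ≤ 2 * ρ ^ n := by
    calc ‖z ^ n - (ρ : ℂ) ^ n‖
        ≤ ‖z ^ n‖ + ‖(ρ : ℂ) ^ n‖ :=
          norm_sub_le _ _
      _ ≤ ρ ^ n + ρ ^ n := by
          rw [norm_pow, norm_pow, Complex.norm_real, Real.norm_of_nonneg hρ.le]
          have : ‖z‖ ^ n ≤ ρ ^ n :=
            pow_le_pow_left₀ (norm_nonneg z) hz n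
          linarith
      _ = 2 * ρ ^ n := by ring
  have h2 : ‖z ^ n - (ρ : ℂ) ^ n‖ ≤ n * ρ ^ n * C := by
    rcases Nat.eq_zero_or_pos n with rfl | hn
    · simp
    · rw [← geom_sum₂_mul z (ρ : ℂ) n, norm_mul, hzρ]
      have hterm : ∀ i ∈ Finset.range n,
          ‖z ^ i * (ρ : ℂ) ^ (n - 1 - i)‖ ≤ ρ ^ (n - 1) := by
        intro i hi
        rw [Finset.mem_range] at hi
        rw [norm_mul, norm_pow, norm_pow, Complex.norm_real, Real.norm_of_nonneg hρ.le]
        calc ‖z‖ ^ i * ρ ^ (n - 1 - i) ≤ ρ ^ i * ρ ^ (n - 1 - i) := by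
              have : ‖z‖ ^ i ≤ ρ ^ i :=
                pow_le_pow_left₀ (norm_nonneg z) hz i
              have : (0:ℝ) ≤ ρ ^ (n - 1 - i) := by positivity
              nlinarith [pow_le_pow_left₀ (norm_nonneg z) hz i]
          _ = ρ ^ (n - 1) := by
              rw [← pow_add]
              congr 1
              omega
      have hsum : ‖∑ i ∈ Finset.range n, z ^ i * (ρ : ℂ) ^ (n - 1 - i)‖
          ≤ ∑ i ∈ Finset.range n, ρ ^ (n - 1) :=
        le_trans (norm_sum_le _ _) (Finset.sum_le_sum hterm)
      have hρC : (0:ℝ) ≤ ρ * C := by positivity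
      calc ‖∑ i ∈ Finset.range n, z ^ i * (ρ : ℂ) ^ (n - 1 - i)‖ * (ρ * C)
          ≤ (∑ i ∈ Finset.range n, ρ ^ (n - 1)) * (ρ * C) :=
            mul_le_mul_of_nonneg_right hsum hρC
        _ = (n : ℝ) * (ρ ^ (n - 1) * ρ) * C := by
            rw [Finset.sum_const, Finset.card_range, nsmul_eq_mul]; ring
        _ = n * ρ ^ n * C := by
            have : ρ ^ (n - 1) * ρ = ρ ^ n := by
              rw [← pow_succ]; congr 1; omega
            rw [this]
  have hmain : ‖z ^ n - (ρ : ℂ) ^ n‖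
      ≤ ((n : ℝ) * ρ ^ n * C) ^ ε * (2 * ρ ^ n) ^ (1 - ε) :=
    interp_aux (norm_nonneg _) (by positivity) (by positivity) h1 h2
      hε0.le (by linarith)
  refine hmain.trans (le_of_eq ?_)
  have hρn : (0 : ℝ) < ρ ^ n := by positivity
  rw [Real.mul_rpow (by positivity) hC0, Real.mul_rpow (Nat.cast_nonneg n) hρn.le,
    Real.mul_rpow (by norm_num) hρn.le]
  have h : (ρ ^ n : ℝ) ^ ε * (ρ ^ n : ℝ) ^ (1 - ε) = ρ ^ n := by
    rw [← Real.rpow_add hρn]; norm_num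
  calc (n : ℝ) ^ ε * (ρ ^ n : ℝ) ^ ε * C ^ ε * ((2:ℝ) ^ (1-ε) * (ρ ^ n : ℝ) ^ (1-ε))
      = 2 ^ (1 - ε) * ((n : ℝ) ^ ε * ((ρ ^ n : ℝ) ^ ε * (ρ ^ n : ℝ) ^ (1 - ε))) * C ^ ε := by
        ring
    _ = 2 ^ (1 - ε) * ((n : ℝ) ^ ε * ρ ^ n) * C ^ ε := by rw [h]

/-- Fractional Taylor bound (zeroth order): if `A_1^{(ε)}(ρ) = Σ_{n≥1} n^ε |a_n| ρ^n < ∞`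
and `ε ∈ (0,1)`, then for `|z| ≤ ρ`,
`|f(z) - f(ρ)| ≤ 2^{1-ε} A_1^{(ε)}(ρ) |1 - z/ρ|^ε`. -/
theorem fractional_taylor_zeroth (ε ρ : ℝ) (hε : ε ∈ Set.Ioo (0 : ℝ) 1) (hρ : 0 < ρ)
    (a : ℕ → ℂ)
    (hA : Summable fun n : ℕ => (n : ℝ) ^ ε * ‖a n‖ * ρ ^ n)
    (z : ℂ) (hz : ‖z‖ ≤ ρ) :
    ‖(∑' n : ℕ, a n * z ^ n) - ∑' n : ℕ, a n * (ρ : ℂ) ^ n‖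
      ≤ 2 ^ (1 - ε) * (∑' n : ℕ, (n : ℝ) ^ ε * ‖a n‖ * ρ ^ n) *
          ‖1 - z / (ρ : ℂ)‖ ^ ε := by
  obtain ⟨hε0, hε1⟩ := hε
  set C := ‖1 - z / (ρ : ℂ)‖ with hC
  have hC0 : 0 ≤ C := norm_nonneg _
  -- summability of |a n| ρ^n
  have hS : Summable (fun n : ℕ => ‖a n‖ * ρ ^ n) := by
    rw [← summable_nat_add_iff 1]
    refine Summable.of_nonneg_of_le (fun n => by positivity) (fun n => ?_)
      ((summable_nat_add_iff (f := fun n : ℕ => (n : ℝ) ^ ε * ‖a n‖ * ρ ^ n) 1).mpr hA)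
    have h1 : (1 : ℝ) ≤ ((n+1 : ℕ) : ℝ) ^ ε :=
      Real.one_le_rpow (by exact_mod_cast Nat.one_le_iff_ne_zero.mpr (Nat.succ_ne_zero n))
        hε0.le
    nlinarith [norm_nonneg (a (n+1)), pow_pos hρ (n+1),
      mul_nonneg (norm_nonneg (a (n+1))) (pow_pos hρ (n+1)).le]
  have hSz : Summable (fun n : ℕ => a n * z ^ n) := by
    refine Summable.of_norm (Summable.of_nonneg_of_le (fun n => norm_nonneg _) (fun n => ?_) hS)
    rw [norm_mul, norm_pow]
    have : ‖z‖ ^ n ≤ ρ ^ n := pow_le_pow_left₀ (norm_nonneg z) hz n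
    nlinarith [norm_nonneg (a n), pow_nonneg (norm_nonneg z) n]
  have hSρ : Summable (fun n : ℕ => a n * (ρ : ℂ) ^ n) := by
    refine Summable.of_norm (Summable.of_nonneg_of_le (fun n => norm_nonneg _) (fun n => ?_) hS)
    rw [norm_mul, norm_pow, Complex.norm_real, Real.norm_of_nonneg hρ.le]
  -- the bound function
  have hbound : ∀ n : ℕ, ‖a n * z ^ n - a n * (ρ : ℂ) ^ n‖
      ≤ 2 ^ (1 - ε) * ((n : ℝ) ^ ε * ‖a n‖ * ρ ^ n) * C ^ ε := by
    intro n
    have hk := key_aux ε ρ ⟨hε0, hε1⟩ hρ z hz n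
    calc ‖a n * z ^ n - a n * (ρ : ℂ) ^ n‖
        = ‖a n‖ * ‖z ^ n - (ρ : ℂ) ^ n‖ := by
          rw [← norm_mul, mul_sub]
      _ ≤ ‖a n‖ * (2 ^ (1 - ε) * ((n : ℝ) ^ ε * ρ ^ n) * C ^ ε) :=
          mul_le_mul_of_nonneg_left hk (norm_nonneg _)
      _ = 2 ^ (1 - ε) * ((n : ℝ) ^ ε * ‖a n‖ * ρ ^ n) * C ^ ε := by ring
  have hSbound : Summable (fun n : ℕ =>
      2 ^ (1 - ε) * ((n : ℝ) ^ ε * ‖a n‖ * ρ ^ n) * C ^ ε) :=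
    (hA.mul_left _).mul_right _
  have hSg : Summable (fun n : ℕ => ‖a n * z ^ n - a n * (ρ : ℂ) ^ n‖) :=
    hSbound.of_nonneg_of_le (fun n => norm_nonneg _) (fun n => hbound n)
  calc ‖(∑' n : ℕ, a n * z ^ n) - ∑' n : ℕ, a n * (ρ : ℂ) ^ n‖
      = ‖∑' n : ℕ, (a n * z ^ n - a n * (ρ : ℂ) ^ n)‖ := by
        rw [Summable.tsum_sub hSz hSρ]
    _ ≤ ∑' n : ℕ, ‖a n * z ^ n - a n * (ρ : ℂ) ^ n‖ :=
        norm_tsum_le_tsum_norm hSg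
    _ ≤ ∑' n : ℕ, 2 ^ (1 - ε) * ((n : ℝ) ^ ε * ‖a n‖ * ρ ^ n) * C ^ ε :=
        Summable.tsum_le_tsum hbound hSg hSbound
    _ = 2 ^ (1 - ε) * (∑' n : ℕ, (n : ℝ) ^ ε * ‖a n‖ * ρ ^ n) * C ^ ε := by
        rw [tsum_mul_right, tsum_mul_left]
end

section
/- Fractional Taylor bound (first order): let ε ∈ (0,1), f(z) = Σ_{n≥0} a_n z^n, ρ > 0, and suppose A_2^{(1+ε)}(ρ) := Σ_{n≥2} n^{1+ε} |a_n| ρ^n < ∞. Then for any complex z with |z| ≤ ρ, |f(z) - f(ρ) - f'(ρ)(z - ρ)| ≤ (2^{1-ε}/(1+ε)) · A_2^{(1+ε)}(ρ) · |1 - z/ρ|^{1+ε}. -/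
open Finset Complex

lemma aux_sum_rpow_le {ε : ℝ} (hε : 0 < ε) (n : ℕ) :
    ∑ k ∈ Finset.range n, (k : ℝ) ^ ε ≤ (n : ℝ) ^ (1 + ε) / (1 + ε) := by
  have h1 : (0:ℝ) < 1 + ε := by linarith
  induction n with
  | zero => simp [Real.zero_rpow (by linarith : (1:ℝ)+ε ≠ 0)]
  | succ n ih =>
    rw [Finset.sum_range_succ]
    have key : (n : ℝ) ^ (1 + ε) + (1 + ε) * (n : ℝ) ^ ε ≤ ((n : ℝ) + 1) ^ (1 + ε) := by
      rcases Nat.eq_zero_or_pos n with rfl | hn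
      · simp [Real.zero_rpow (by linarith : (1:ℝ)+ε ≠ 0), Real.zero_rpow hε.ne',
          Real.one_rpow]
      · have hn' : (0:ℝ) < n := by exact_mod_cast hn
        have hinv : (0:ℝ) ≤ 1 / (n:ℝ) := by positivity
        have hB := one_add_mul_self_le_rpow_one_add (s := 1 / (n:ℝ))
          (by linarith) (le_add_of_nonneg_right hε.le)
        have hmul : ((1 + 1/(n:ℝ)) ^ (1+ε)) * (n:ℝ)^(1+ε) = ((n:ℝ)+1)^(1+ε) := by
          rw [← Real.mul_rpow (by positivity) hn'.le]
          congr 1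
          field_simp
        have hpow : (n:ℝ)^(1+ε) * (1/(n:ℝ)) = (n:ℝ)^ε := by
          rw [Real.rpow_one_add' hn'.le h1.ne']
          field_simp
        have h2 : (1 + (1+ε) * (1/(n:ℝ))) * (n:ℝ)^(1+ε) ≤ ((n:ℝ)+1)^(1+ε) := by
          rw [← hmul]
          exact mul_le_mul_of_nonneg_right hB (by positivity)
        nlinarith [h2, hpow]
    rw [le_div_iff₀ h1] at ih ⊢
    push_cast
    nlinarith [key, ih]

lemma aux_min_le {ε x : ℝ} (hε : 0 < ε) (hε1 : ε < 1) (hx : 0 ≤ x) :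
    min 2 x ≤ 2 ^ (1 - ε) * x ^ ε := by
  rcases le_total x 2 with h | h
  · rw [min_eq_right h]
    calc x = x ^ (1-ε) * x ^ ε := by
            rw [← Real.rpow_add' hx (by norm_num)]; simp
      _ ≤ 2 ^ (1-ε) * x ^ ε :=
            mul_le_mul_of_nonneg_right
              (Real.rpow_le_rpow hx h (by linarith)) (Real.rpow_nonneg hx ε)
  · rw [min_eq_left h]
    calc (2:ℝ) = 2 ^ (1-ε) * 2 ^ ε := by
            rw [← Real.rpow_add (by norm_num)]; simp
      _ ≤ 2 ^ (1-ε) * x ^ ε :=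
            mul_le_mul_of_nonneg_left
              (Real.rpow_le_rpow (by norm_num) h hε.le)
              (Real.rpow_nonneg (by norm_num) _)

lemma aux_abs_pow_sub_one {w : ℂ} (hw : ‖w‖ ≤ 1) (k : ℕ) :
    ‖w ^ k - 1‖ ≤ k * ‖w - 1‖ := by
  induction k with
  | zero => simp
  | succ k ih =>
    have h1 : w ^ (k+1) - 1 = w ^ k * (w - 1) + (w ^ k - 1) := by ring
    have hwk : ‖w ^ k‖ ≤ 1 := by
      rw [norm_pow]; exact pow_le_one₀ (norm_nonneg _) hw
    rw [h1]
    calc ‖w ^ k * (w - 1) + (w ^ k - 1)‖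
        ≤ ‖w ^ k * (w - 1)‖ + ‖w ^ k - 1‖ :=
          norm_add_le _ _
      _ ≤ 1 * ‖w - 1‖ + k * ‖w - 1‖ := by
          refine add_le_add ?_ ih
          rw [norm_mul]
          exact mul_le_mul_of_nonneg_right hwk (norm_nonneg _)
      _ = (k+1 : ℕ) * ‖w - 1‖ := by push_cast; ring

lemma aux_key {ε : ℝ} (hε : 0 < ε) (hε1 : ε < 1) {w : ℂ} (hw : ‖w‖ ≤ 1) (n : ℕ) :
    ‖w ^ n - 1 - n * (w - 1)‖ ≤
      2 ^ (1 - ε) / (1 + ε) * (n : ℝ) ^ (1 + ε) * ‖1 - w‖ ^ (1 + ε) := by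
  have h1 : (0:ℝ) < 1 + ε := by linarith
  have hid : w ^ n - 1 - n * (w - 1) = (∑ k ∈ Finset.range n, (w ^ k - 1)) * (w - 1) := by
    rw [Finset.sum_sub_distrib, sub_mul, geom_sum_mul]
    simp
  set d := ‖w - 1‖ with hd
  have hdnn : 0 ≤ d := norm_nonneg _
  have habs1w : ‖1 - w‖ = d := by rw [hd, norm_sub_rev]
  rw [hid, norm_mul, habs1w]
  have hsum : ‖∑ k ∈ Finset.range n, (w ^ k - 1)‖ ≤
      2 ^ (1-ε) * d ^ ε * ((n:ℝ) ^ (1+ε) / (1+ε)) := by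
    calc ‖∑ k ∈ Finset.range n, (w ^ k - 1)‖
        ≤ ∑ k ∈ Finset.range n, ‖w ^ k - 1‖ :=
          norm_sum_le _ _
      _ ≤ ∑ k ∈ Finset.range n, 2 ^ (1-ε) * d ^ ε * (k:ℝ) ^ ε := by
          apply Finset.sum_le_sum
          intro k _
          have hb : ‖w ^ k - 1‖ ≤ min 2 ((k:ℝ) * d) := by
            apply le_min
            · calc ‖w ^ k - 1‖
                  ≤ ‖w ^ k‖ + ‖(1:ℂ)‖ := by
                    simpa [sub_eq_add_neg] using norm_add_le (w ^ k) (-1)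
                _ ≤ 2 := by
                    rw [norm_pow, norm_one]
                    have := pow_le_one₀ (norm_nonneg w) hw (n := k)
                    linarith
            · exact aux_abs_pow_sub_one hw k
          calc ‖w ^ k - 1‖ ≤ min 2 ((k:ℝ) * d) := hb
            _ ≤ 2 ^ (1-ε) * ((k:ℝ) * d) ^ ε := aux_min_le hε hε1 (by positivity)
            _ = 2 ^ (1-ε) * d ^ ε * (k:ℝ) ^ ε := by
                rw [Real.mul_rpow (Nat.cast_nonneg k) hdnn]; ring
      _ = 2 ^ (1-ε) * d ^ ε * ∑ k ∈ Finset.range n, (k:ℝ) ^ ε := by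
          rw [Finset.mul_sum]
      _ ≤ 2 ^ (1-ε) * d ^ ε * ((n:ℝ) ^ (1+ε) / (1+ε)) := by
          exact mul_le_mul_of_nonneg_left (aux_sum_rpow_le hε n) (by positivity)
  calc ‖∑ k ∈ Finset.range n, (w ^ k - 1)‖ * d
      ≤ 2 ^ (1-ε) * d ^ ε * ((n:ℝ) ^ (1+ε) / (1+ε)) * d :=
        mul_le_mul_of_nonneg_right hsum hdnn
    _ = 2 ^ (1-ε) / (1+ε) * (n:ℝ) ^ (1+ε) * (d ^ ε * d) := by ring
    _ = 2 ^ (1-ε) / (1+ε) * (n:ℝ) ^ (1+ε) * d ^ (1+ε) := by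
        rw [Real.rpow_one_add' hdnn h1.ne']; ring

/-- Fractional Taylor bound (first order): if
`A_2^{(1+ε)}(ρ) = Σ_{n≥2} n^{1+ε} |a_n| ρ^n < ∞` and `ε ∈ (0,1)`, then for `|z| ≤ ρ`,
`|f(z) - f(ρ) - f'(ρ)(z-ρ)| ≤ (2^{1-ε}/(1+ε)) A_2^{(1+ε)}(ρ) |1 - z/ρ|^{1+ε}`. -/
theorem fractional_taylor_first (ε ρ : ℝ) (hε : ε ∈ Set.Ioo (0 : ℝ) 1) (hρ : 0 < ρ)
    (a : ℕ → ℂ)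
    (hA : Summable fun n : ℕ =>
      ((n + 2 : ℕ) : ℝ) ^ (1 + ε) * ‖a (n + 2)‖ * ρ ^ (n + 2))
    (z : ℂ) (hz : ‖z‖ ≤ ρ) :
    ‖(∑' n : ℕ, a n * z ^ n) - (∑' n : ℕ, a n * (ρ : ℂ) ^ n)
        - (∑' n : ℕ, ((n : ℂ) + 1) * a (n + 1) * (ρ : ℂ) ^ n) * (z - ρ)‖
      ≤ (2 ^ (1 - ε) / (1 + ε)) *
          (∑' n : ℕ, ((n + 2 : ℕ) : ℝ) ^ (1 + ε) * ‖a (n + 2)‖ * ρ ^ (n + 2)) *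
          ‖1 - z / (ρ : ℂ)‖ ^ (1 + ε) := by
  obtain ⟨hε0, hε1⟩ := hε
  have h1 : (0:ℝ) < 1 + ε := by linarith
  have hρC : (ρ:ℂ) ≠ 0 := by exact_mod_cast hρ.ne'
  have habsρ : ‖(ρ:ℂ)‖ = ρ := by
    simp [abs_of_pos hρ]
  set w : ℂ := z / ρ with hw
  have hzw : z = ρ * w := by rw [hw]; field_simp
  have hwle : ‖w‖ ≤ 1 := by
    rw [hw, norm_div, habsρ]
    exact div_le_one_of_le₀ hz hρ.le
  have hone : ∀ n : ℕ, (1:ℝ) ≤ ((n+2:ℕ):ℝ)^(1+ε) := by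
    intro n
    have h2 : (1:ℝ) ≤ ((n+2:ℕ):ℝ) := by exact_mod_cast Nat.le_add_left 1 (n+1)
    have := Real.rpow_le_rpow_of_exponent_le h2 (le_of_lt (by linarith : (0:ℝ) < 1+ε))
    simpa using this
  -- summability
  have hSgen : ∀ u : ℂ, ‖u‖ ≤ ρ → Summable (fun n => a (n+2) * u^(n+2)) := by
    intro u hu
    apply Summable.of_norm_bounded hA
    intro n
    rw [norm_mul, norm_pow]
    calc ‖a (n+2)‖ * ‖u‖ ^ (n+2)
        ≤ ‖a (n+2)‖ * ρ ^ (n+2) :=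
          mul_le_mul_of_nonneg_left (pow_le_pow_left₀ (norm_nonneg u) hu _)
            (norm_nonneg _)
      _ ≤ ((n+2:ℕ):ℝ)^(1+ε) * ‖a (n+2)‖ * ρ ^ (n+2) := by
          rw [mul_assoc]
          exact le_mul_of_one_le_left (by positivity) (hone n)
  have hSz := hSgen z hz
  have hSρ := hSgen (ρ:ℂ) (le_of_eq habsρ)
  have hSfz : Summable (fun n => a n * z^n) := (summable_nat_add_iff 2).1 hSz
  have hSfρ : Summable (fun n => a n * (ρ:ℂ)^n) := (summable_nat_add_iff 2).1 hSρ
  have hSd1 : Summable (fun n : ℕ => ((n:ℂ) + 2) * a (n+2) * (ρ:ℂ)^(n+1)) := by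
    apply Summable.of_norm_bounded (hA.mul_left ρ⁻¹)
    intro n
    have hcast : ((n:ℂ) + 2) = ((n+2:ℕ):ℂ) := by push_cast; ring
    rw [norm_mul, norm_mul, norm_pow, hcast, Complex.norm_natCast,
      habsρ]
    have hle : ((n+2:ℕ):ℝ) ≤ ((n+2:ℕ):ℝ)^(1+ε) := by
      have h2 : (1:ℝ) ≤ ((n+2:ℕ):ℝ) := by exact_mod_cast Nat.le_add_left 1 (n+1)
      have := Real.rpow_le_rpow_of_exponent_le h2 (by linarith : (1:ℝ) ≤ 1+ε)
      simpa using this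
    have hpow : ρ⁻¹ * ρ ^ (n+2) = ρ ^ (n+1) := by
      rw [pow_succ]
      field_simp
    calc ((n+2:ℕ):ℝ) * ‖a (n+2)‖ * ρ ^ (n+1)
        ≤ ((n+2:ℕ):ℝ)^(1+ε) * ‖a (n+2)‖ * ρ ^ (n+1) := by
          exact mul_le_mul_of_nonneg_right
            (mul_le_mul_of_nonneg_right hle (norm_nonneg _)) (by positivity)
      _ = ρ⁻¹ * (((n+2:ℕ):ℝ)^(1+ε) * ‖a (n+2)‖ * ρ ^ (n+2)) := by
          rw [mul_comm (ρ⁻¹), mul_assoc, ← hpow]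
          ring
  have hSd : Summable (fun n : ℕ => ((n:ℂ)+1) * a (n+1) * (ρ:ℂ)^n) := by
    apply (summable_nat_add_iff 1).1
    exact hSd1.congr fun n => by push_cast; ring
  -- split tsums
  have e1 : ∀ (u : ℂ), Summable (fun n => a n * u^n) →
      (∑' n, a n * u^n) = a 0 + a 1 * u + ∑' n, a (n+2) * u^(n+2) := by
    intro u hS
    rw [Summable.tsum_eq_zero_add hS, Summable.tsum_eq_zero_add ((summable_nat_add_iff 1).2 hS)]
    have h0 : (fun n : ℕ => a (n+1+1) * u^(n+1+1)) = (fun n => a (n+2) * u^(n+2)) := rfl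
    rw [h0]
    ring
  have e3 : (∑' n : ℕ, ((n:ℂ)+1) * a (n+1) * (ρ:ℂ)^n)
      = a 1 + ∑' n : ℕ, ((n:ℂ)+2) * a (n+2) * (ρ:ℂ)^(n+1) := by
    rw [Summable.tsum_eq_zero_add hSd]
    have h0 : (∑' n : ℕ, ((((n:ℕ)+1:ℕ):ℂ)+1) * a (n+1+1) * (ρ:ℂ)^(n+1))
        = ∑' n : ℕ, ((n:ℂ)+2) * a (n+2) * (ρ:ℂ)^(n+1) :=
      tsum_congr fun n => by push_cast; ring
    rw [h0]
    simp
  rw [e1 z hSfz, e1 (ρ:ℂ) hSfρ, e3]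
  have ealg : (a 0 + a 1 * z + ∑' n, a (n+2) * z^(n+2))
      - (a 0 + a 1 * (ρ:ℂ) + ∑' n, a (n+2) * (ρ:ℂ)^(n+2))
      - (a 1 + ∑' n : ℕ, ((n:ℂ)+2) * a (n+2) * (ρ:ℂ)^(n+1)) * (z - ρ)
      = (∑' n, a (n+2) * z^(n+2)) - (∑' n, a (n+2) * (ρ:ℂ)^(n+2))
        - (∑' n : ℕ, ((n:ℂ)+2) * a (n+2) * (ρ:ℂ)^(n+1)) * (z - ρ) := by ring
  rw [ealg]
  have eT : (∑' n, a (n+2) * z^(n+2)) - (∑' n, a (n+2) * (ρ:ℂ)^(n+2))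
        - (∑' n : ℕ, ((n:ℂ)+2) * a (n+2) * (ρ:ℂ)^(n+1)) * (z - ρ)
      = ∑' n : ℕ, a (n+2) * (z^(n+2) - (ρ:ℂ)^(n+2) - ((n:ℂ)+2) * (ρ:ℂ)^(n+1) * (z - ρ)) := by
    rw [← Summable.tsum_sub hSz hSρ, ← tsum_mul_right,
      ← Summable.tsum_sub (hSz.sub hSρ) (hSd1.mul_right _)]
    exact tsum_congr fun n => by ring
  rw [eT]
  apply tsum_of_norm_bounded ((hA.hasSum.mul_left (2^(1-ε)/(1+ε))).mul_right _)
  intro n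
  have hinner : z^(n+2) - (ρ:ℂ)^(n+2) - ((n:ℂ)+2) * (ρ:ℂ)^(n+1) * (z - ρ)
      = (ρ:ℂ)^(n+2) * (w^(n+2) - 1 - ((n+2:ℕ):ℂ) * (w - 1)) := by
    rw [hzw]; push_cast; ring
  rw [norm_mul, hinner, norm_mul, norm_pow, habsρ]
  have hkey := aux_key hε0 hε1 hwle (n+2)
  calc ‖a (n+2)‖ * (ρ^(n+2) * ‖w^(n+2) - 1 - ((n+2:ℕ):ℂ) * (w-1)‖)
      ≤ ‖a (n+2)‖ * (ρ^(n+2) *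
          (2^(1-ε)/(1+ε) * ((n+2:ℕ):ℝ)^(1+ε) * ‖1 - w‖^(1+ε))) := by
        exact mul_le_mul_of_nonneg_left
          (mul_le_mul_of_nonneg_left hkey (by positivity)) (norm_nonneg _)
    _ = 2^(1-ε)/(1+ε) * (((n+2:ℕ):ℝ)^(1+ε) * ‖a (n+2)‖ * ρ^(n+2)) *
          ‖1 - z/(ρ:ℂ)‖^(1+ε) := by
        rw [hw]
        ring
end

section
/- Consequence of submultiplicativity for the generating function: for n-step self-avoiding walk counts c_n(x) on Q^N, z ∈ [0,∞), and H_z(x) = Σ_{n≥1} c_n(x) z^n, one has z ∂_z H_z(x) ≤ (H_z * G_z)(x), where G_z(x) = δ_{0,x} + H_z(x) and * is convolution on Q^N. -/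
/-- The number of `n`-step self-avoiding walks on the hypercube `(ZMod 2)^N`
from the origin to `x`. -/
noncomputable def sawCountTo (N n : ℕ) (x : Fin N → ZMod 2) : ℕ :=
  Nat.card {ω : Fin (n + 1) → (Fin N → ZMod 2) //
    ω 0 = 0 ∧ ω (Fin.last n) = x ∧
    (∀ i : Fin n, hammingDist (ω i.castSucc) (ω i.succ) = 1) ∧
    Function.Injective ω}

/-- The two-point generating function with the `n = 0` term omitted:
`H_z(x) = Σ_{n≥1} c_n(x) z^n`. -/
noncomputable def Hgen (N : ℕ) (z : ℝ) (x : Fin N → ZMod 2) : ℝ :=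
  ∑' n : ℕ, (sawCountTo N (n + 1) x : ℝ) * z ^ (n + 1)

/-- The full two-point function `G_z(x) = δ_{0,x} + H_z(x)`. -/
noncomputable def Ggen (N : ℕ) (z : ℝ) (x : Fin N → ZMod 2) : ℝ :=
  (if x = 0 then 1 else 0) + Hgen N z x

/-- The subtype of `n`-step SAWs from `0` to `x`. -/
private def SAWtype (N n : ℕ) (x : Fin N → ZMod 2) : Type :=
  {ω : Fin (n + 1) → (Fin N → ZMod 2) //
    ω 0 = 0 ∧ ω (Fin.last n) = x ∧
    (∀ i : Fin n, hammingDist (ω i.castSucc) (ω i.succ) = 1) ∧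
    Function.Injective ω}

private instance (N n : ℕ) (x : Fin N → ZMod 2) : Finite (SAWtype N n x) := by
  unfold SAWtype; infer_instance

private lemma sawCountTo_eq (N n : ℕ) (x : Fin N → ZMod 2) :
    sawCountTo N n x = Nat.card (SAWtype N n x) := rfl

private lemma saw_vanish (N m : ℕ) (x : Fin N → ZMod 2) (hm : 2 ^ N ≤ m) :
    sawCountTo N m x = 0 := by
  rw [sawCountTo, Nat.card_eq_zero]
  refine Or.inl ⟨fun ω => ?_⟩
  obtain ⟨ω, _, _, _, hinj⟩ := ω
  have h := Nat.card_le_card_of_injective ω hinj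
  simp only [Nat.card_eq_fintype_card, Fintype.card_fin, Fintype.card_fun,
    ZMod.card, Fintype.card_fin] at h
  omega

private lemma saw_zero (N : ℕ) (y : Fin N → ZMod 2) :
    sawCountTo N 0 y = if y = 0 then 1 else 0 := by
  rw [sawCountTo]
  split_ifs with h
  · subst h
    rw [Nat.card_eq_one_iff_unique]
    constructor
    · constructor
      rintro ⟨ω, h0, -, -, -⟩ ⟨ω', h0', -, -, -⟩
      apply Subtype.ext
      funext i
      show ω i = ω' i
      rw [Fin.fin_one_eq_zero i, h0, h0']
    · exact ⟨⟨fun _ => 0, rfl, rfl, fun i => i.elim0,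
        fun i j _ => by rw [Fin.fin_one_eq_zero i, Fin.fin_one_eq_zero j]⟩⟩
  · rw [Nat.card_eq_zero]
    refine Or.inl ⟨fun ω => ?_⟩
    obtain ⟨ω, h0, hl, -, -⟩ := ω
    exact h (by rw [← hl, Fin.fin_one_eq_zero (Fin.last 0), h0])

private lemma hammingDist_sub_right' {N : ℕ} (u v w : Fin N → ZMod 2) :
    hammingDist (u - w) (v - w) = hammingDist u v := by
  simp [hammingDist, Pi.sub_apply, sub_left_inj]

/-- Split an `(a+b)`-step SAW into its first `a` steps and last `b` steps
(the latter translated to start at the origin). -/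
private def splitMap (N a b : ℕ) (x : Fin N → ZMod 2)
    (ω : SAWtype N (a + b) x) :
    Σ y : Fin N → ZMod 2, SAWtype N a (x - y) × SAWtype N b y :=
  ⟨x - ω.val ⟨a, by omega⟩,
    ⟨⟨fun i => ω.val ⟨i.val, by omega⟩, by
      obtain ⟨ω, h0, hl, hs, hinj⟩ := ω
      refine ⟨?_, ?_, ?_, ?_⟩
      · show ω ⟨(0 : Fin (a + 1)).val, by omega⟩ = 0
        rw [show (⟨(0 : Fin (a + 1)).val, by omega⟩ : Fin (a + b + 1)) = 0 from
          Fin.ext (by simp)]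
        exact h0
      · show ω ⟨(Fin.last a).val, by omega⟩ = x - (x - ω ⟨a, by omega⟩)
        rw [sub_sub_cancel]
        rfl
      · intro i
        have := hs ⟨i.val, by omega⟩
        convert this using 2 <;> exact congrArg ω (Fin.ext (by simp))
      · intro i j hij
        exact Fin.ext (by simpa using congrArg Fin.val (hinj hij))⟩,
    ⟨fun j => ω.val ⟨a + j.val, by omega⟩ - ω.val ⟨a, by omega⟩, by
      obtain ⟨ω, h0, hl, hs, hinj⟩ := ω
      refine ⟨?_, ?_, ?_, ?_⟩
      · show ω ⟨a + (0 : Fin (b + 1)).val, by omega⟩ - ω ⟨a, by omega⟩ = 0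
        rw [show (⟨a + (0 : Fin (b + 1)).val, by omega⟩ : Fin (a + b + 1)) =
          ⟨a, by omega⟩ from Fin.ext (by simp)]
        exact sub_self _
      · show ω ⟨a + (Fin.last b).val, by omega⟩ - ω ⟨a, by omega⟩ = _
        rw [show (⟨a + (Fin.last b).val, by omega⟩ : Fin (a + b + 1)) =
          Fin.last (a + b) from Fin.ext (by simp [Fin.last])]
        exact congrArg (fun t => t - ω ⟨a, by omega⟩) hl
      · intro j
        rw [hammingDist_sub_right']
        have := hs ⟨a + j.val, by omega⟩
        convert this using 2 <;> exact congrArg ω (Fin.ext (by simp [Fin.succ] <;> omega))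
      · intro i j hij
        have : ω ⟨a + i.val, by omega⟩ = ω ⟨a + j.val, by omega⟩ :=
          sub_left_inj.mp hij
        exact Fin.ext (by simpa using congrArg Fin.val (hinj this))⟩⟩⟩

private lemma splitMap_injective (N a b : ℕ) (x : Fin N → ZMod 2) :
    Function.Injective (splitMap N a b x) := by
  intro ω ω' h
  have h1 := congrArg (fun p : Σ y : Fin N → ZMod 2,
    SAWtype N a (x - y) × SAWtype N b y => p.2.1.val) h
  have h2 := congrArg (fun p : Σ y : Fin N → ZMod 2,
    SAWtype N a (x - y) × SAWtype N b y => p.2.2.val) h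
  simp only [splitMap] at h1 h2
  have ha : ω.val ⟨a, by omega⟩ = ω'.val ⟨a, by omega⟩ := by
    have := congrFun h1 (Fin.last a)
    simpa [Fin.last] using this
  apply Subtype.ext
  funext k
  rcases le_or_gt k.val a with hk | hk
  · have := congrFun h1 ⟨k.val, by omega⟩
    simpa using this
  · have h2' := congrFun h2 ⟨k.val - a, by omega⟩
    simp only at h2'
    rw [ha, sub_left_inj] at h2'
    rw [show (⟨a + (k.val - a), by omega⟩ : Fin (a + b + 1)) = k from
      Fin.ext (by simp; omega)] at h2'
    exact h2'

private lemma nat_card_sigma {ι : Type*} [Fintype ι] (α : ι → Type*)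
    [∀ i, Finite (α i)] : Nat.card (Σ i, α i) = ∑ i, Nat.card (α i) := by
  letI : ∀ i, Fintype (α i) := fun i => Fintype.ofFinite _
  simp [Nat.card_eq_fintype_card]

private lemma saw_split (N a b : ℕ) (x : Fin N → ZMod 2) :
    sawCountTo N (a + b) x
      ≤ ∑ y : Fin N → ZMod 2, sawCountTo N a (x - y) * sawCountTo N b y := by
  have hrhs : ∑ y : Fin N → ZMod 2, sawCountTo N a (x - y) * sawCountTo N b y
      = Nat.card (Σ y : Fin N → ZMod 2, SAWtype N a (x - y) × SAWtype N b y) := by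
    rw [nat_card_sigma]
    simp [Nat.card_prod, sawCountTo_eq]
  rw [hrhs, sawCountTo_eq]
  exact Nat.card_le_card_of_injective _ (splitMap_injective N a b x)

/-- For `z ≥ 0`, `z ∂_z H_z(x) ≤ (H_z * G_z)(x)`. -/
theorem zdz_H_le_H_conv_G (N : ℕ) (z : ℝ) (hz : 0 ≤ z) (x : Fin N → ZMod 2) :
    (∑' n : ℕ, ((n + 1 : ℕ) : ℝ) * (sawCountTo N (n + 1) x : ℝ) * z ^ (n + 1))
      ≤ ∑ y : Fin N → ZMod 2, Hgen N z (x - y) * Ggen N z y := by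
  classical
  set M := 2 ^ N with hM
  -- rewrite all generating functions as finite sums
  have hH : ∀ w : Fin N → ZMod 2,
      Hgen N z w = ∑ n ∈ Finset.range M, (sawCountTo N (n + 1) w : ℝ) * z ^ (n + 1) := by
    intro w
    refine tsum_eq_sum fun n hn => ?_
    rw [saw_vanish N (n + 1) w (by simp only [Finset.mem_range, not_lt] at hn; omega)]
    simp
  have hG : ∀ y : Fin N → ZMod 2,
      Ggen N z y = ∑ j ∈ Finset.range (M + 1), (sawCountTo N j y : ℝ) * z ^ j := by
    intro y
    rw [Finset.sum_range_succ', Ggen, hH y, saw_zero]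
    simp only [pow_zero, mul_one, apply_ite (Nat.cast : ℕ → ℝ), Nat.cast_one, Nat.cast_zero]
    rw [add_comm]
  have hL : (∑' n : ℕ, ((n + 1 : ℕ) : ℝ) * (sawCountTo N (n + 1) x : ℝ) * z ^ (n + 1))
      = ∑ n ∈ Finset.range M, ((n + 1 : ℕ) : ℝ) * (sawCountTo N (n + 1) x : ℝ) * z ^ (n + 1) := by
    refine tsum_eq_sum fun n hn => ?_
    rw [saw_vanish N (n + 1) x (by simp only [Finset.mem_range, not_lt] at hn; omega)]
    simp
  rw [hL]
  calc ∑ n ∈ Finset.range M, ((n + 1 : ℕ) : ℝ) * (sawCountTo N (n + 1) x : ℝ) * z ^ (n + 1)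
      = ∑ n ∈ Finset.range M, ∑ i ∈ Finset.range (n + 1),
          (sawCountTo N (n + 1) x : ℝ) * z ^ (n + 1) := by
        refine Finset.sum_congr rfl fun n _ => ?_
        rw [Finset.sum_const, Finset.card_range, nsmul_eq_mul, mul_assoc]
    _ ≤ ∑ n ∈ Finset.range M, ∑ i ∈ Finset.range (n + 1),
          (∑ y : Fin N → ZMod 2,
            (sawCountTo N (i + 1) (x - y) : ℝ) * (sawCountTo N (n - i) y : ℝ)) * z ^ (n + 1) := by
        refine Finset.sum_le_sum fun n _ => Finset.sum_le_sum fun i hi => ?_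
        have hi' : i ≤ n := by simpa [Nat.lt_succ_iff] using hi
        refine mul_le_mul_of_nonneg_right ?_ (pow_nonneg hz _)
        have h := saw_split N (i + 1) (n - i) x
        rw [show i + 1 + (n - i) = n + 1 by omega] at h
        calc (sawCountTo N (n + 1) x : ℝ)
            ≤ ((∑ y : Fin N → ZMod 2, sawCountTo N (i + 1) (x - y) * sawCountTo N (n - i) y : ℕ) : ℝ) :=
              Nat.cast_le.mpr h
          _ = _ := by push_cast; ring
    _ = ∑ n ∈ Finset.range M, ∑ i ∈ Finset.range (n + 1), ∑ y : Fin N → ZMod 2,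
          ((sawCountTo N (i + 1) (x - y) : ℝ) * z ^ (i + 1)) *
            ((sawCountTo N (n - i) y : ℝ) * z ^ (n - i)) := by
        refine Finset.sum_congr rfl fun n _ => Finset.sum_congr rfl fun i hi => ?_
        rw [Finset.sum_mul]
        refine Finset.sum_congr rfl fun y _ => ?_
        rw [show z ^ (n + 1) = z ^ (i + 1) * z ^ (n - i) by
          rw [← pow_add]; congr 1
          have : i < n + 1 := Finset.mem_range.mp hi
          omega]
        ring
    _ = ∑ i ∈ Finset.range M, ∑ n ∈ Finset.Ico i M, ∑ y : Fin N → ZMod 2,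
          ((sawCountTo N (i + 1) (x - y) : ℝ) * z ^ (i + 1)) *
            ((sawCountTo N (n - i) y : ℝ) * z ^ (n - i)) := by
        simp only [Finset.range_eq_Ico]
        rw [← Finset.sum_Ico_Ico_comm 0 M (fun i n => ∑ y : Fin N → ZMod 2,
          ((sawCountTo N (i + 1) (x - y) : ℝ) * z ^ (i + 1)) *
            ((sawCountTo N (n - i) y : ℝ) * z ^ (n - i)))]
    _ = ∑ i ∈ Finset.range M, ∑ j ∈ Finset.range (M - i), ∑ y : Fin N → ZMod 2,
          ((sawCountTo N (i + 1) (x - y) : ℝ) * z ^ (i + 1)) *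
            ((sawCountTo N j y : ℝ) * z ^ j) := by
        refine Finset.sum_congr rfl fun i _ => ?_
        rw [Finset.sum_Ico_eq_sum_range]
        refine Finset.sum_congr rfl fun j _ => ?_
        rw [show i + j - i = j by omega]
    _ ≤ ∑ i ∈ Finset.range M, ∑ j ∈ Finset.range (M + 1), ∑ y : Fin N → ZMod 2,
          ((sawCountTo N (i + 1) (x - y) : ℝ) * z ^ (i + 1)) *
            ((sawCountTo N j y : ℝ) * z ^ j) := by
        refine Finset.sum_le_sum fun i _ => ?_
        refine Finset.sum_le_sum_of_subset_of_nonneg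
          (Finset.range_subset_range.mpr (le_trans (Nat.sub_le M i) (Nat.le_succ M))) fun j _ _ => ?_
        refine Finset.sum_nonneg fun y _ => ?_
        positivity
    _ = ∑ y : Fin N → ZMod 2, ∑ i ∈ Finset.range M, ∑ j ∈ Finset.range (M + 1),
          ((sawCountTo N (i + 1) (x - y) : ℝ) * z ^ (i + 1)) *
            ((sawCountTo N j y : ℝ) * z ^ j) := by
        refine Eq.trans (Finset.sum_congr rfl fun i _ =>
          Finset.sum_comm (s := Finset.range (M + 1)) (t := Finset.univ)
            (f := fun j y => (sawCountTo N (i + 1) (x - y) : ℝ) * z ^ (i + 1) *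
              ((sawCountTo N j y : ℝ) * z ^ j))) ?_
        exact Finset.sum_comm (s := Finset.range M) (t := Finset.univ)
          (f := fun i y => ∑ j ∈ Finset.range (M + 1),
            (sawCountTo N (i + 1) (x - y) : ℝ) * z ^ (i + 1) *
              ((sawCountTo N j y : ℝ) * z ^ j))
    _ = ∑ y : Fin N → ZMod 2, Hgen N z (x - y) * Ggen N z y := by
        refine Finset.sum_congr rfl fun y _ => ?_
        rw [hH, hG, Finset.sum_mul_sum]
end
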